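/- Let S be a type, R a commutative ring, and q : S → R. For a finitely supported function D : S →₀ ℕ define α(D) = ∏_{x ∈ supp(D)} (q(x)^{D(x)} − q(x)^{D(x)−1}) and r(D) = ∏_{x ∈ supp(D)} (1 − q(x)). Then for every D : S →₀ ℕ one has Σ_{(D₁,D₂) : D₁ + D₂ = D} α(D₁)·r(D₂) = 1 if D = 0 and = 0 otherwise (the sum taken over the antidiagonal of D). (The function-field case of Proposition 'p:alpha invertible' of the paper: Schieder's function r is the convolution inverse of α in the completed semigroup algebra of effective divisors.) -/

import Mathlib

open Finset Finsupp

section Aux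

variable {S : Type*} [DecidableEq S] {R : Type*} [CommRing R]

/-- Splitting the antidiagonal of a sum of finitely supported `ℕ`-valued
functions with disjoint supports. -/
private lemma sum_antidiagonal_add_of_disjoint {M : Type*} [AddCommMonoid M]
    (g h : S →₀ ℕ) (hdisj : Disjoint g.support h.support)
    (F : (S →₀ ℕ) × (S →₀ ℕ) → M) :
    ∑ P ∈ Finset.HasAntidiagonal.antidiagonal (g + h), F P =
      ∑ P ∈ Finset.HasAntidiagonal.antidiagonal g ×ˢ Finset.HasAntidiagonal.antidiagonal h,
        F (P.1.1 + P.2.1, P.1.2 + P.2.2) := by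
  have hg_of : ∀ x ∈ g.support, x ∉ h.support := fun x hx =>
    Finset.disjoint_left.mp hdisj hx
  refine (Finset.sum_nbij'
    (i := fun P : ((S →₀ ℕ) × (S →₀ ℕ)) × ((S →₀ ℕ) × (S →₀ ℕ)) =>
      (P.1.1 + P.2.1, P.1.2 + P.2.2))
    (j := fun P : (S →₀ ℕ) × (S →₀ ℕ) =>
      ((P.1.filter (· ∈ g.support), P.2.filter (· ∈ g.support)),
       (P.1.filter (¬ · ∈ g.support), P.2.filter (¬ · ∈ g.support))))
    ?_ ?_ ?_ ?_ ?_).symm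
  · rintro ⟨⟨a₁, a₂⟩, ⟨b₁, b₂⟩⟩ hP
    simp only [Finset.mem_product, Finset.HasAntidiagonal.mem_antidiagonal] at hP ⊢
    obtain ⟨ha, hb⟩ := hP
    rw [show a₁ + b₁ + (a₂ + b₂) = (a₁ + a₂) + (b₁ + b₂) by abel, ha, hb]
  · rintro ⟨D₁, D₂⟩ hP
    simp only [Finset.HasAntidiagonal.mem_antidiagonal] at hP
    have key : ∀ p : S → Prop, ∀ inst : DecidablePred p,
        D₁.filter p + D₂.filter p = (g + h).filter p := by
      intro p inst
      rw [← Finsupp.filter_add, hP]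
    simp only [Finset.mem_product, Finset.HasAntidiagonal.mem_antidiagonal]
    constructor
    · rw [key, Finsupp.filter_add,
        (Finsupp.filter_eq_self_iff _ _).mpr (fun x hx => Finsupp.mem_support_iff.mpr hx),
        (Finsupp.filter_eq_zero_iff _ _).mpr
          (fun x hx => by
            by_contra hne
            exact hg_of x hx (Finsupp.mem_support_iff.mpr hne)),
        add_zero]
    · rw [key, Finsupp.filter_add,
        (Finsupp.filter_eq_zero_iff _ _).mpr (fun x hx => by
          by_contra hne
          exact hx (Finsupp.mem_support_iff.mpr hne)),
        zero_add]
      exact (Finsupp.filter_eq_self_iff _ _).mpr (fun x hx hxg =>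
          hg_of x hxg (Finsupp.mem_support_iff.mpr hx))
  · rintro ⟨⟨a₁, a₂⟩, ⟨b₁, b₂⟩⟩ hP
    simp only [Finset.mem_product, Finset.HasAntidiagonal.mem_antidiagonal] at hP
    obtain ⟨ha, hb⟩ := hP
    have hsub : ∀ (u v w : S →₀ ℕ), u + v = w → ∀ x, u x ≠ 0 → x ∈ w.support := by
      intro u v w huv x hx
      rw [Finsupp.mem_support_iff, ← huv]
      simp only [Finsupp.add_apply]
      intro hc
      exact hx (by omega)
    have hfa : ∀ u v : S →₀ ℕ, u + v = g →
        u.filter (· ∈ g.support) = u ∧ u.filter (¬ · ∈ g.support) = 0 := by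
      intro u v huv
      constructor
      · exact (Finsupp.filter_eq_self_iff _ _).mpr (fun x hx => hsub u v g huv x hx)
      · exact (Finsupp.filter_eq_zero_iff _ _).mpr (fun x hx => by
          by_contra hne
          exact hx (hsub u v g huv x hne))
    have hfb : ∀ u v : S →₀ ℕ, u + v = h →
        u.filter (· ∈ g.support) = 0 ∧ u.filter (¬ · ∈ g.support) = u := by
      intro u v huv
      constructor
      · exact (Finsupp.filter_eq_zero_iff _ _).mpr (fun x hx => by
          by_contra hne
          exact hg_of x hx (hsub u v h huv x hne))
      · exact (Finsupp.filter_eq_self_iff _ _).mpr (fun x hx hxg =>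
          hg_of x hxg (hsub u v h huv x hx))
    simp only [Prod.mk.injEq, Finsupp.filter_add]
    refine ⟨⟨?_, ?_⟩, ?_, ?_⟩
    · rw [(hfa a₁ a₂ ha).1, (hfb b₁ b₂ hb).1, add_zero]
    · rw [(hfa a₂ a₁ (by rwa [add_comm])).1, (hfb b₂ b₁ (by rwa [add_comm])).1, add_zero]
    · rw [(hfa a₁ a₂ ha).2, (hfb b₁ b₂ hb).2, zero_add]
    · rw [(hfa a₂ a₁ (by rwa [add_comm])).2, (hfb b₂ b₁ (by rwa [add_comm])).2, zero_add]
  · rintro ⟨D₁, D₂⟩ _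
    simp only [Prod.mk.injEq]
    exact ⟨Finsupp.filter_pos_add_filter_neg D₁ _, Finsupp.filter_pos_add_filter_neg D₂ _⟩
  · rintro ⟨⟨a₁, a₂⟩, ⟨b₁, b₂⟩⟩ _
    rfl

/-- Convolution of pointwise-multiplicative functions on `S →₀ ℕ` is computed
pointwise. -/
private lemma conv_prod (f g : S → ℕ → R) (hf : ∀ x, f x 0 = 1) (hg : ∀ x, g x 0 = 1)
    (hpt : ∀ x n, ∑ p ∈ Finset.HasAntidiagonal.antidiagonal n, f x p.1 * g x p.2
        = if n = 0 then 1 else 0)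
    (D : S →₀ ℕ) :
    ∑ P ∈ Finset.HasAntidiagonal.antidiagonal D, (P.1.prod f) * (P.2.prod g)
      = if D = 0 then 1 else 0 := by
  induction D using Finsupp.induction with
  | zero => simp [Finsupp.antidiagonal_zero]
  | single_add a n D han hn ih =>
    have hDne : Finsupp.single a n + D ≠ 0 := by
      intro hc
      apply hn
      have := DFunLike.congr_fun hc a
      simpa [Finsupp.single_eq_same, Finsupp.notMem_support_iff.mp han] using this
    rw [if_neg hDne]
    have hdisj : Disjoint (Finsupp.single a n).support D.support := by
      rw [Finsupp.support_single_ne_zero a hn]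
      simpa [Finset.disjoint_singleton_left] using han
    rw [sum_antidiagonal_add_of_disjoint _ _ hdisj]
    have hterm : ∀ P ∈ Finset.HasAntidiagonal.antidiagonal (Finsupp.single a n) ×ˢ Finset.HasAntidiagonal.antidiagonal D,
        ((P.1.1 + P.2.1, P.1.2 + P.2.2).1.prod f) * ((P.1.1 + P.2.1, P.1.2 + P.2.2).2.prod g)
          = ((P.1.1.prod f) * (P.1.2.prod g)) * ((P.2.1.prod f) * (P.2.2.prod g)) := by
      rintro ⟨⟨a₁, a₂⟩, ⟨b₁, b₂⟩⟩ hP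
      simp only [Finset.mem_product, Finset.HasAntidiagonal.mem_antidiagonal] at hP
      obtain ⟨ha, hb⟩ := hP
      have hsupp : ∀ (u v w : S →₀ ℕ), u + v = w → u.support ⊆ w.support := by
        intro u v w huv x hx
        rw [Finsupp.mem_support_iff] at hx ⊢
        rw [← huv]
        simp only [Finsupp.add_apply]
        omega
      have hd1 : Disjoint a₁.support b₁.support :=
        Finset.disjoint_of_subset_left (hsupp a₁ a₂ _ ha)
          (Finset.disjoint_of_subset_right (hsupp b₁ b₂ _ hb) hdisj)
      have hd2 : Disjoint a₂.support b₂.support :=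
        Finset.disjoint_of_subset_left (hsupp a₂ a₁ _ (by rwa [add_comm]))
          (Finset.disjoint_of_subset_right (hsupp b₂ b₁ _ (by rwa [add_comm])) hdisj)
      rw [Finsupp.prod_add_index_of_disjoint hd1, Finsupp.prod_add_index_of_disjoint hd2]
      ring
    have hsingle : ∑ P ∈ Finset.HasAntidiagonal.antidiagonal (Finsupp.single a n),
        (P.1.prod f) * (P.2.prod g) = 0 := by
      rw [Finsupp.antidiagonal_single, Finset.sum_map]
      have : ∀ p : ℕ × ℕ,
          ((Finsupp.single a p.1).prod f) * ((Finsupp.single a p.2).prod g)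
            = f a p.1 * g a p.2 := by
        intro p
        rw [Finsupp.prod_single_index (hf a), Finsupp.prod_single_index (hg a)]
      calc ∑ p ∈ Finset.HasAntidiagonal.antidiagonal n,
            ((Finsupp.single a p.1).prod f) * ((Finsupp.single a p.2).prod g)
          = ∑ p ∈ Finset.HasAntidiagonal.antidiagonal n, f a p.1 * g a p.2 :=
            Finset.sum_congr rfl (fun p _ => this p)
        _ = if n = 0 then 1 else 0 := hpt a n
        _ = 0 := if_neg hn
    rw [Finset.sum_congr rfl hterm, Finset.sum_product]
    have hfac : ∀ x ∈ Finset.HasAntidiagonal.antidiagonal (Finsupp.single a n),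
        (∑ y ∈ Finset.HasAntidiagonal.antidiagonal D,
          (x, y).1.1.prod f * (x, y).1.2.prod g * ((x, y).2.1.prod f * (x, y).2.2.prod g))
        = (x.1.prod f * x.2.prod g) * ∑ y ∈ Finset.HasAntidiagonal.antidiagonal D, y.1.prod f * y.2.prod g := by
      intro x _
      rw [Finset.mul_sum]
    rw [Finset.sum_congr rfl hfac, ← Finset.sum_mul, hsingle, zero_mul]

/-- partial sums of `αₓ` telescope. -/
private lemma sum_alpha (c : R) (m : ℕ) :
    ∑ i ∈ Finset.range (m + 1), (if i = 0 then 1 else c ^ i - c ^ (i - 1)) = c ^ m := by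
  induction m with
  | zero => simp
  | succ m ih =>
    rw [Finset.sum_range_succ, ih, if_neg (Nat.succ_ne_zero m)]
    simp only [Nat.add_sub_cancel]
    ring

/-- The pointwise convolution identity. -/
private lemma pointwise (c : R) (n : ℕ) :
    ∑ p ∈ Finset.HasAntidiagonal.antidiagonal n,
        (if p.1 = 0 then 1 else c ^ p.1 - c ^ (p.1 - 1)) *
          (if p.2 = 0 then 1 else 1 - c)
      = if n = 0 then 1 else 0 := by
  cases n with
  | zero => simp
  | succ m =>
    rw [if_neg (Nat.succ_ne_zero m), Finset.Nat.sum_antidiagonal_eq_sum_range_succ_mk,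
      Finset.sum_range_succ]
    have h1 : ∀ i ∈ Finset.range (m + 1),
        (if i = 0 then 1 else c ^ i - c ^ (i - 1)) *
            (if m + 1 - i = 0 then (1 : R) else 1 - c)
          = (if i = 0 then 1 else c ^ i - c ^ (i - 1)) * (1 - c) := by
      intro i hi
      rw [Finset.mem_range] at hi
      rw [if_neg (by omega : ¬ m + 1 - i = 0)]
    rw [Finset.sum_congr rfl h1, ← Finset.sum_mul, sum_alpha,
      if_neg (Nat.succ_ne_zero m), if_pos (Nat.sub_self (m + 1)), Nat.add_sub_cancel, mul_one]
    ring

end Aux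

/-- The function-field case of Proposition `p:alpha invertible` of the paper:
Schieder's function `r` is the convolution inverse of `α` in the completed
semigroup algebra of effective divisors.  For `D : S →₀ ℕ` set
`α(D) = ∏_{x ∈ supp D} (q x ^ D x - q x ^ (D x - 1))` and
`r(D) = ∏_{x ∈ supp D} (1 - q x)`; then
`Σ_{D₁ + D₂ = D} α(D₁) r(D₂)` is `1` if `D = 0` and `0` otherwise. -/
theorem stmt_16 {S : Type*} [DecidableEq S] {R : Type*} [CommRing R] (q : S → R)
    (D : S →₀ ℕ) :
    ∑ P ∈ Finset.HasAntidiagonal.antidiagonal D,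
        (∏ x ∈ P.1.support, (q x ^ P.1 x - q x ^ (P.1 x - 1))) *
          (∏ x ∈ P.2.support, (1 - q x))
      = if D = 0 then 1 else 0 := by
  have key := conv_prod (fun x m => if m = 0 then 1 else q x ^ m - q x ^ (m - 1))
    (fun x m => if m = 0 then 1 else 1 - q x)
    (fun x => rfl) (fun x => rfl)
    (fun x n => pointwise (q x) n) D
  rw [← key]
  refine Finset.sum_congr rfl ?_
  rintro ⟨D₁, D₂⟩ _
  congr 1
  · refine Finset.prod_congr rfl (fun x hx => ?_)
    rw [Finsupp.mem_support_iff] at hx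
    simp [Finsupp.prod, if_neg hx]
  · refine Finset.prod_congr rfl (fun x hx => ?_)
    rw [Finsupp.mem_support_iff] at hx
    simp [Finsupp.prod, if_neg hx]
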